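/- If (Y,S) is a POD minimal system and M is a minimal subset of Y×X for a minimal system (X,T) that is not an extension of Y, then M = Y×X. (Key step: if (S^n × id_X)M ∩ M ≠ ∅ for a minimal set M and some n, then (S^n × id_X)M = M.) -/

import Mathlib

/-- The group of self-homeomorphisms under composition, so that `T ^ n` (`n : ℤ`)
denotes the `n`-th iterate of `T`. -/
instance Homeomorph.instGroupPow {X : Type*} [TopologicalSpace X] : Group (X ≃ₜ X) where
  mul f g := g.trans f
  one := Homeomorph.refl X
  inv := Homeomorph.symm
  mul_assoc _ _ _ := Homeomorph.ext fun _ => rfl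
  one_mul _ := Homeomorph.ext fun _ => rfl
  mul_one _ := Homeomorph.ext fun _ => rfl
  inv_mul_cancel f := Homeomorph.ext fun x => f.symm_apply_apply x

/-- The orbit closure of a point under a homeomorphism. -/
def orbitCl {X : Type*} [TopologicalSpace X] (T : X ≃ₜ X) (p : X) : Set X :=
  closure {q | ∃ n : ℤ, (T ^ n) p = q}

/-- A (minimal) dynamical system: every orbit closure is everything. -/
def IsMinimalSys {X : Type*} [TopologicalSpace X] (T : X ≃ₜ X) : Prop :=
  ∀ x : X, orbitCl T x = Set.univ

/-- Totally minimal: every nonzero power is minimal. -/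
def IsTotallyMinimal {X : Type*} [TopologicalSpace X] (T : X ≃ₜ X) : Prop :=
  ∀ n : ℤ, n ≠ 0 → IsMinimalSys (T ^ n)

/-- The graph Γ_n = {(T^n x, x) : x ∈ X}. -/
def graphPow {X : Type*} [TopologicalSpace X] (T : X ≃ₜ X) (n : ℤ) : Set (X × X) :=
  {p | ∃ x : X, p = ((T ^ n) x, x)}

/-- POD: totally minimal and for distinct u, v some graph Γ_n (n ≠ 0) lies in the
orbit closure of (u, v) under T × T. -/
def IsPOD {X : Type*} [TopologicalSpace X] (T : X ≃ₜ X) : Prop :=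
  IsMinimalSys T ∧ IsTotallyMinimal T ∧
    ∀ u v : X, u ≠ v → ∃ n : ℤ, n ≠ 0 ∧
      graphPow T n ⊆ orbitCl (T.prodCongr T) (u, v)

/-- Doubly minimal: minimal, and every orbit closure of T × T is either everything
or a graph Γ_m. -/
def IsDoublyMinimal {X : Type*} [TopologicalSpace X] (T : X ≃ₜ X) : Prop :=
  IsMinimalSys T ∧
    ∀ p : X × X, orbitCl (T.prodCongr T) p = Set.univ ∨
      ∃ m : ℤ, orbitCl (T.prodCongr T) p = graphPow T m

/-- A factor map: continuous equivariant surjection. -/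
def IsFactorMap {X Y : Type*} [TopologicalSpace X] [TopologicalSpace Y]
    (T : X ≃ₜ X) (S : Y ≃ₜ Y) (π : X → Y) : Prop :=
  Continuous π ∧ Function.Surjective π ∧ ∀ x, π (T x) = S (π x)

/-- Disjointness: the only closed invariant subset of the product projecting
onto both coordinates is the whole product. -/
def SysDisjoint {X Y : Type*} [TopologicalSpace X] [TopologicalSpace Y]
    (T : X ≃ₜ X) (S : Y ≃ₜ Y) : Prop :=
  ∀ M : Set (X × Y), IsClosed M → (T.prodCongr S) '' M = M →
    Prod.fst '' M = Set.univ → Prod.snd '' M = Set.univ → M = Set.univ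

/-- A recurrent point: in the closure of its forward orbit with positive times. -/
def IsRecurrentPt {X : Type*} [TopologicalSpace X] (T : X ≃ₜ X) (x : X) : Prop :=
  x ∈ closure {q | ∃ n : ℕ, 1 ≤ n ∧ (T ^ n) x = q}

/-- A proximal pair: the orbits come arbitrarily close together. -/
def IsProximal {X : Type*} [PseudoMetricSpace X] (T : X ≃ₜ X) (x x' : X) : Prop :=
  ∀ ε > 0, ∃ n : ℤ, dist ((T ^ n) x) ((T ^ n) x') < ε

/-- A distal point: proximal only to itself. -/
def IsDistalPt {X : Type*} [PseudoMetricSpace X] (T : X ≃ₜ X) (x : X) : Prop :=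
  ∀ x', IsProximal T x x' → x' = x

/-- A minimal subset: nonempty, closed, invariant, with all orbits dense in it. -/
def IsMinimalSubset {X : Type*} [TopologicalSpace X] (T : X ≃ₜ X) (M : Set X) : Prop :=
  M.Nonempty ∧ IsClosed M ∧ (T : X ≃ₜ X) '' M = M ∧
    ∀ p ∈ M, M ⊆ closure {q | ∃ n : ℤ, (T ^ n) p = q}

/-- Topological transitivity. -/
def IsTopTransitive {X : Type*} [TopologicalSpace X] (T : X ≃ₜ X) : Prop :=
  ∀ U V : Set X, IsOpen U → IsOpen V → U.Nonempty → V.Nonempty →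
    ∃ n : ℤ, ((T ^ n) '' U ∩ V).Nonempty

/-- Weak mixing: the product system is topologically transitive. -/
def IsWeaklyMixing {X : Type*} [TopologicalSpace X] (T : X ≃ₜ X) : Prop :=
  IsTopTransitive (T.prodCongr T)


section Aux

variable {Z : Type*} [TopologicalSpace Z]

theorem homeo_image_mul (f g : Z ≃ₜ Z) (M : Set Z) : (f * g) '' M = f '' (g '' M) := by
  rw [show ⇑(f * g) = ⇑f ∘ ⇑g from rfl, Set.image_comp]

theorem homeo_image_inv (f : Z ≃ₜ Z) {M : Set Z} (h : f '' M = M) : (f⁻¹ : Z ≃ₜ Z) '' M = M := by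
  conv_lhs => rw [← h, ← Set.image_comp]
  rw [show (⇑(f⁻¹ : Z ≃ₜ Z) ∘ ⇑f) = id from funext fun x => f.symm_apply_apply x, Set.image_id]

theorem homeo_image_zpow (f : Z ≃ₜ Z) {M : Set Z} (h : f '' M = M) (n : ℤ) :
    (f ^ n) '' M = M := by
  induction n using Int.induction_on with
  | zero =>
    rw [zpow_zero, show ⇑(1 : Z ≃ₜ Z) = id from rfl, Set.image_id]
  | succ k ih => rw [zpow_add_one, homeo_image_mul, h, ih]
  | pred k ih => rw [zpow_sub_one, homeo_image_mul, homeo_image_inv f h, ih]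

theorem homeo_mem_zpow (f : Z ≃ₜ Z) {M : Set Z} (h : f '' M = M) {p : Z} (hp : p ∈ M) (n : ℤ) :
    (f ^ n) p ∈ M := by
  rw [← homeo_image_zpow f h n]; exact Set.mem_image_of_mem _ hp

theorem minimalSubset_eq_orbitCl (F : Z ≃ₜ Z) {M : Set Z} (hM : IsMinimalSubset F M)
    {p : Z} (hp : p ∈ M) : M = orbitCl F p := by
  refine Set.Subset.antisymm (hM.2.2.2 p hp) (closure_minimal ?_ hM.2.1)
  rintro q ⟨n, rfl⟩
  exact homeo_mem_zpow F hM.2.2.1 hp n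

theorem homeo_commute_zpow_apply {F G : Z ≃ₜ Z} (hc : ∀ z, F (G z) = G (F z)) (n : ℤ) (z : Z) :
    (F ^ n) (G z) = G ((F ^ n) z) := by
  have hC : Commute F G := Homeomorph.ext hc
  exact congrArg (fun h : Z ≃ₜ Z => h z) (hC.zpow_left n).eq

theorem isMinimalSubset_image {F G : Z ≃ₜ Z} (hc : ∀ z, F (G z) = G (F z)) {M : Set Z}
    (hM : IsMinimalSubset F M) : IsMinimalSubset F (G '' M) := by
  obtain ⟨hne, hcl, hinv, hdense⟩ := hM
  refine ⟨hne.image G, G.isClosedMap _ hcl, ?_, ?_⟩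
  · calc F '' (G '' M) = (⇑F ∘ ⇑G) '' M := (Set.image_comp _ _ _).symm
      _ = (⇑G ∘ ⇑F) '' M := by rw [show (⇑F ∘ ⇑G) = (⇑G ∘ ⇑F) from funext hc]
      _ = G '' (F '' M) := Set.image_comp _ _ _
      _ = G '' M := by rw [hinv]
  · rintro q ⟨p, hp, rfl⟩
    intro w hw
    obtain ⟨m0, hm0, rfl⟩ := hw
    have h2 : G m0 ∈ G '' closure {r | ∃ n : ℤ, (F ^ n) p = r} :=
      ⟨m0, hdense p hp hm0, rfl⟩
    have h4 : G '' {r | ∃ n : ℤ, (F ^ n) p = r} ⊆ {r | ∃ n : ℤ, (F ^ n) (G p) = r} := by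
      rintro _ ⟨r, ⟨n, rfl⟩, rfl⟩
      exact ⟨n, homeo_commute_zpow_apply hc n p⟩
    exact closure_mono h4 (image_closure_subset_closure_image G.continuous h2)

theorem closed_inv_eq_univ {f : Z ≃ₜ Z} (hmin : IsMinimalSys f) {A : Set Z}
    (hA : IsClosed A) (hinv : ∀ a ∈ A, ∀ n : ℤ, (f ^ n) a ∈ A) (hne : A.Nonempty) :
    A = Set.univ := by
  obtain ⟨a, ha⟩ := hne
  apply Set.eq_univ_of_univ_subset
  calc Set.univ = orbitCl f a := (hmin a).symm
    _ ⊆ A := closure_minimal (by rintro q ⟨n, rfl⟩; exact hinv a ha n) hA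

end Aux

theorem homeo_prodCongr_zpow {X Y : Type*} [TopologicalSpace X] [TopologicalSpace Y]
    (S : Y ≃ₜ Y) (T : X ≃ₜ X) (n : ℤ) :
    (S.prodCongr T) ^ n = (S ^ n).prodCongr (T ^ n) := by
  induction n using Int.induction_on with
  | zero => rw [zpow_zero, zpow_zero, zpow_zero]; exact Homeomorph.ext fun _ => rfl
  | succ k ih =>
    rw [zpow_add_one, zpow_add_one, zpow_add_one, ih]
    exact Homeomorph.ext fun _ => rfl
  | pred k ih =>
    rw [zpow_sub_one, zpow_sub_one, zpow_sub_one, ih]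
    exact Homeomorph.ext fun _ => rfl

theorem pod_minimalSubset_eq_univ {X Y : Type*} [MetricSpace X] [CompactSpace X] [MetricSpace Y] [CompactSpace Y]
    (T : X ≃ₜ X) (S : Y ≃ₜ Y) (hS : IsPOD S) (hT : IsMinimalSys T)
    (hnf : ¬ ∃ π : X → Y, IsFactorMap T S π)
    (M : Set (Y × X)) (hM : IsMinimalSubset (S.prodCongr T) M) :
    M = Set.univ := by
  obtain ⟨hSmin, hStot, hSpod⟩ := hS
  obtain ⟨hne, hcl, hinv, hdense⟩ := hM
  set F : (Y × X) ≃ₜ (Y × X) := S.prodCongr T with hF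
  have hFpow : ∀ (j : ℤ) (p : Y × X), (F ^ j) p = ((S ^ j) p.1, (T ^ j) p.2) := by
    intro j p; rw [hF, homeo_prodCongr_zpow]; rfl
  have hMcpt : IsCompact M := hcl.isCompact
  -- the projection to X is everything
  have hsnd : Prod.snd '' M = Set.univ := by
    apply closed_inv_eq_univ hT (hMcpt.image continuous_snd).isClosed
    · rintro a ⟨p, hp, rfl⟩ j
      refine ⟨(F ^ j) p, homeo_mem_zpow F hinv hp j, ?_⟩
      rw [hFpow]
    · exact hne.image _
  have hfst : Prod.fst '' M = Set.univ := by
    apply closed_inv_eq_univ hSmin (hMcpt.image continuous_fst).isClosed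
    · rintro a ⟨p, hp, rfl⟩ j
      refine ⟨(F ^ j) p, homeo_mem_zpow F hinv hp j, ?_⟩
      rw [hFpow]
    · exact hne.image _
  have hfib : ∀ x : X, ∃ y : Y, (y, x) ∈ M := by
    intro x
    obtain ⟨p, hp, hpx⟩ := hsnd ▸ Set.mem_univ x
    exact ⟨p.1, by rw [← hpx]; exact hp⟩
  by_cases hsep : ∀ x : X, ∀ u v : Y, (u, x) ∈ M → (v, x) ∈ M → u = v
  · -- every fiber is a singleton: build a factor map, contradiction
    exfalso; apply hnf
    choose π hπ using hfib
    refine ⟨π, ?_, ?_, ?_⟩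
    · apply SeqContinuous.continuous
      intro u x hu
      apply Filter.tendsto_of_subseq_tendsto
      intro ns hns
      obtain ⟨y, φ, hφ, hy⟩ := CompactSpace.tendsto_subseq (fun k => π (u (ns k)))
      refine ⟨φ, ?_⟩
      have hyx : (y, x) ∈ M := by
        have hlim : Filter.Tendsto (fun k => (π (u (ns (φ k))), u (ns (φ k))))
            Filter.atTop (nhds (y, x)) :=
          Filter.Tendsto.prodMk_nhds hy (hu.comp (hns.comp hφ.tendsto_atTop))
        exact hcl.mem_of_tendsto hlim (Filter.Eventually.of_forall fun k => hπ _)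
      have : y = π x := hsep x y (π x) hyx (hπ x)
      rw [← this]
      exact hy
    · intro y
      obtain ⟨p, hp, hpy⟩ := hfst ▸ Set.mem_univ y
      refine ⟨p.2, hsep p.2 _ _ (hπ p.2) ?_⟩
      rw [← hpy]; exact hp
    · intro x
      have h1 : F (π x, x) ∈ M := by
        rw [← hinv]; exact ⟨_, hπ x, rfl⟩
      exact hsep (T x) _ _ (hπ (T x)) h1
  · -- some fiber has two points: use POD
    push_neg at hsep
    obtain ⟨x0, u, v, hum, hvm, huv⟩ := hsep
    obtain ⟨n, hn0, hgraph⟩ := hSpod u v huv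
    set G : (Y × X) ≃ₜ (Y × X) := (S ^ n).prodCongr (Homeomorph.refl X) with hG
    have hcomm : ∀ p : Y × X, F (G p) = G (F p) := by
      intro p
      have h1 : S ((S ^ n) p.1) = (S ^ n) (S p.1) :=
        congrArg (fun h : Y ≃ₜ Y => h p.1) (Commute.zpow_right (Commute.refl S) n).eq
      show (S ((S ^ n) p.1), T p.2) = ((S ^ n) (S p.1), T p.2)
      rw [h1]
    -- find a point in (G '' M) ∩ M
    have hmem : ((S ^ n) u, u) ∈
        closure {q : Y × Y | ∃ j : ℤ, ((S.prodCongr S) ^ j) (u, v) = q} :=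
      hgraph ⟨u, rfl⟩
    obtain ⟨q, hq, hqlim⟩ := mem_closure_iff_seq_limit.mp hmem
    choose m hm using hq
    have hq1 : ∀ j, (q j).1 = (S ^ m j) u := by
      intro j
      conv_lhs => rw [← hm j, homeo_prodCongr_zpow]
      rfl
    have hq2 : ∀ j, (q j).2 = (S ^ m j) v := by
      intro j
      conv_lhs => rw [← hm j, homeo_prodCongr_zpow]
      rfl
    obtain ⟨z, φ, hφ, hz⟩ := CompactSpace.tendsto_subseq (fun k => (T ^ m k) x0)
    have hlim1 : Filter.Tendsto (fun k => (q (φ k)).1) Filter.atTop (nhds ((S ^ n) u)) :=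
      ((continuous_fst.tendsto _).comp hqlim).comp hφ.tendsto_atTop
    have hlim2 : Filter.Tendsto (fun k => (q (φ k)).2) Filter.atTop (nhds u) :=
      ((continuous_snd.tendsto _).comp hqlim).comp hφ.tendsto_atTop
    have hA : ((S ^ n) u, z) ∈ M := by
      refine hcl.mem_of_tendsto (Filter.Tendsto.prodMk_nhds hlim1 hz)
        (Filter.Eventually.of_forall fun k => ?_)
      have := homeo_mem_zpow F hinv hum (m (φ k))
      rw [hFpow] at this
      simpa [hq1 (φ k)] using this
    have hB : (u, z) ∈ M := by
      refine hcl.mem_of_tendsto (Filter.Tendsto.prodMk_nhds hlim2 hz)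
        (Filter.Eventually.of_forall fun k => ?_)
      have := homeo_mem_zpow F hinv hvm (m (φ k))
      rw [hFpow] at this
      simpa [hq2 (φ k)] using this
    -- the minimal sets M and G '' M intersect, hence are equal
    have hNmin : IsMinimalSubset F (G '' M) :=
      isMinimalSubset_image hcomm ⟨hne, hcl, hinv, hdense⟩
    have hNA : ((S ^ n) u, z) ∈ G '' M := ⟨(u, z), hB, rfl⟩
    have hGinv : ⇑G '' M = M := by
      rw [minimalSubset_eq_orbitCl F hNmin hNA]
      exact (minimalSubset_eq_orbitCl F ⟨hne, hcl, hinv, hdense⟩ hA).symm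
    -- now every fiber is S^n-invariant, hence all of Y
    apply Set.eq_univ_iff_forall.mpr
    rintro ⟨y, x⟩
    obtain ⟨y0, hy0⟩ := hfib x
    have hfiball : ({w : Y | (w, x) ∈ M} : Set Y) = Set.univ := by
      apply closed_inv_eq_univ (hStot n hn0)
        (hcl.preimage (continuous_id.prodMk continuous_const))
      · intro a ha k
        have hk : (G ^ k) (a, x) ∈ M :=
          homeo_mem_zpow G hGinv (show (a, x) ∈ M from ha) k
        have he : (G ^ k) (a, x) = (((S ^ n) ^ k) a, x) := by
          rw [hG, homeo_prodCongr_zpow]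
          have hrefl : (Homeomorph.refl X) ^ k = Homeomorph.refl X := one_zpow k
          rw [hrefl]
          rfl
        rw [he] at hk
        exact hk
      · exact ⟨y0, hy0⟩
    exact Set.eq_univ_iff_forall.mp hfiball y
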